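/- The exit angle Θ = 2·atan((x − √(x² − (2r − y)y))/(2r − y)) (for 2r − y ≠ 0 and discriminant x² − (2r − y)y ≥ 0) satisfies the tangency condition: the point (x,y) minus the tangent point (r sin Θ, r(1 − cos Θ)) is parallel to the heading direction (cos Θ, sin Θ). -/

import Mathlib

open Real

/-- The exit angle `Θ = 2·arctan((x − √(x² − (2r − y)y))/(2r − y))` satisfies the
tangency condition: the displacement from the tangent point `(r sin Θ, r(1 − cos Θ))`
to `(x,y)` is parallel to the heading direction `(cos Θ, sin Θ)`. -/
theorem exit_angle_tangency (r x y : ℝ) (h : 2 * r - y ≠ 0)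
    (hdisc : 0 ≤ x ^ 2 - (2 * r - y) * y) :
    let Θ := 2 * Real.arctan ((x - Real.sqrt (x ^ 2 - (2 * r - y) * y)) / (2 * r - y))
    (x - r * Real.sin Θ) * Real.sin Θ = (y - r * (1 - Real.cos Θ)) * Real.cos Θ := by
  intro Θ
  set s := Real.sqrt (x ^ 2 - (2 * r - y) * y) with hs
  have hsq : s ^ 2 = x ^ 2 - (2 * r - y) * y := Real.sq_sqrt hdisc
  set t : ℝ := (x - s) / (2 * r - y) with ht
  have key : (2 * r - y) * t ^ 2 - 2 * x * t + y = 0 := by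
    have : (x - s) ^ 2 - 2 * x * (x - s) + y * (2 * r - y) = 0 := by
      nlinarith [hsq]
    field_simp [ht]
    rw [ht]
    field_simp
    ring_nf
    ring_nf at this
    linear_combination this
  have h1 : (0:ℝ) < 1 + t ^ 2 := by positivity
  have hsqrt : Real.sqrt (1 + t ^ 2) ^ 2 = 1 + t ^ 2 := Real.sq_sqrt h1.le
  have hsqrtpos : (0:ℝ) < Real.sqrt (1 + t ^ 2) := Real.sqrt_pos.mpr h1
  have hsin : Real.sin Θ = 2 * t / (1 + t ^ 2) := by
    show Real.sin (2 * Real.arctan t) = _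
    rw [Real.sin_two_mul, Real.sin_arctan, Real.cos_arctan]
    field_simp
    rw [hsqrt]
  have hcos : Real.cos Θ = (1 - t ^ 2) / (1 + t ^ 2) := by
    show Real.cos (2 * Real.arctan t) = _
    rw [Real.cos_two_mul, Real.cos_arctan]
    rw [div_pow, one_pow, hsqrt]
    field_simp
    ring
  rw [hsin, hcos]
  field_simp
  nlinarith [key, sq_nonneg t, sq_nonneg (1+t^2)]
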